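/- There is a commuting bicomplex structure: on the secondary Hochschild chains C_n(A,B,ε), the operators satisfy N(1 − λ) = (1 − λ)N = 0, N b = b' N, (1 − λ) b' = b (1 − λ), and b² = (b')² = 0, so the columns alternating between b and −b' connected by horizontal maps 1 − λ and N form a double complex C(A,B,ε). -/

import Mathlib

open scoped TensorProduct
open MulOpposite PiTensorProduct

noncomputable section

/-- Index set for the strictly upper triangular positions of an `m × m` matrix. -/
abbrev UT (m : ℕ) := {p : Fin m × Fin m // p.1 < p.2}

/-- The tensor space `A^{⊗ m} ⊗ B^{⊗ m(m-1)/2}` in its matrix representation. -/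
def TS (k A B : Type) [Field k] [Ring A] [Algebra k A] [CommRing B] [Algebra k B]
    (m : ℕ) : Type :=
  (⨂[k] _ : Fin m, A) ⊗[k] (⨂[k] _ : UT m, B)

variable (k A B : Type) [Field k] [Ring A] [Algebra k A] [CommRing B] [Algebra k B]

instance (m : ℕ) : AddCommGroup (TS k A B m) :=
  inferInstanceAs (AddCommGroup ((⨂[k] _ : Fin m, A) ⊗[k] (⨂[k] _ : UT m, B)))

instance (m : ℕ) : Module k (TS k A B m) :=
  inferInstanceAs (Module k ((⨂[k] _ : Fin m, A) ⊗[k] (⨂[k] _ : UT m, B)))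

/-- The secondary Hochschild cochain space `C^n(A,B,ε) = Hom_k(A^{⊗(n+1)} ⊗ B^{⊗ n(n+1)/2}, k)`. -/
abbrev Cc (n : ℕ) : Type := TS k A B (n + 1) →ₗ[k] k

/-- The pure tensor (generator) determined by diagonal entries `a` and
upper-triangular entries `β` (read at indices `< m`). -/
def gen (m : ℕ) (a : ℕ → A) (β : ℕ → ℕ → B) : TS k A B m :=
  (tprod k fun i : Fin m => a i) ⊗ₜ[k] (tprod k fun p : UT m => β p.1.1 p.1.2)

/-- Diagonal of the matrix obtained by merging diagonal entries `i`, `i+1` via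
`a_i a_{i+1} ε(b_{i,i+1})`. -/
def mergeA (ε : B →ₐ[k] A) (i : ℕ) (a : ℕ → A) (β : ℕ → ℕ → B) : ℕ → A :=
  fun j => if j < i then a j else if j = i then a i * a (i + 1) * ε (β i (i + 1)) else a (j + 1)

/-- Preimages of the index `p` under the monotone surjection collapsing `i` and `i+1`. -/
def preim (i p : ℕ) : Finset ℕ :=
  if p < i then {p} else if p = i then {i, i + 1} else {p + 1}

/-- `B`-entries of the matrix obtained by merging rows/columns `i` and `i+1`. -/
def mergeB (i : ℕ) (β : ℕ → ℕ → B) : ℕ → ℕ → B :=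
  fun p q => ∏ u ∈ preim i p, ∏ v ∈ preim i q, β u v

/-- Diagonal of the "cyclic merge": `a_m a_0 ε(b_{0,m})` in position `0`
(top index `m`). -/
def cmergeA (ε : B →ₐ[k] A) (m : ℕ) (a : ℕ → A) (β : ℕ → ℕ → B) : ℕ → A :=
  fun j => if j = 0 then a m * a 0 * ε (β 0 m) else a j

/-- `B`-entries of the cyclic merge: first row becomes `b_{q,m} b_{0,q}`. -/
def cmergeB (m : ℕ) (β : ℕ → ℕ → B) : ℕ → ℕ → B :=
  fun p q => if p = 0 then β q m * β 0 q else β p q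

/-- Diagonal of the cyclically rotated matrix: `a_n` moves to position `0`. -/
def rotA (n : ℕ) (a : ℕ → A) : ℕ → A :=
  fun j => if j = 0 then a n else a (j - 1)

/-- `B`-entries of the cyclically rotated matrix: the first row becomes
`b_{0,n}, …, b_{n-1,n}`. -/
def rotB (n : ℕ) (β : ℕ → ℕ → B) : ℕ → ℕ → B :=
  fun p q => if p = 0 then β (q - 1) n else β (p - 1) (q - 1)

/-! ### Auxiliary infrastructure -/

section Aux

/-- The monotone collapse `ℕ → ℕ` sending `i` and `i+1` to `i`. -/
def col (i x : ℕ) : ℕ := if x ≤ i then x else x - 1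

lemma mem_preim {i p x : ℕ} : x ∈ preim i p ↔ col i x = p := by
  unfold preim col
  split_ifs <;> simp [Finset.mem_insert] <;> omega

lemma preim_pairwise_disjoint (i : ℕ) (s : Finset ℕ) :
    Set.PairwiseDisjoint (↑s) (preim i) := by
  intro p _ q _ hpq
  simp only [Function.onFun]
  rw [Finset.disjoint_left]
  intro x hx hx'
  exact hpq (by rw [← mem_preim.1 hx, mem_preim.1 hx'])

lemma mergeB_mergeB (i m : ℕ) (β : ℕ → ℕ → B) (p q : ℕ) :
    mergeB B i (mergeB B m β) p q
      = ∏ u ∈ (preim i p).biUnion (preim m), ∏ v ∈ (preim i q).biUnion (preim m), β u v := by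
  unfold mergeB
  rw [Finset.prod_biUnion (preim_pairwise_disjoint _ _)]
  refine Finset.prod_congr rfl fun u _ => ?_
  rw [Finset.prod_comm]
  refine Finset.prod_congr rfl fun u' _ => ?_
  rw [Finset.prod_biUnion (preim_pairwise_disjoint _ _)]

lemma biUnion_preim (i j : ℕ) (h : i ≤ j) (p : ℕ) :
    (preim i p).biUnion (preim (j+1)) = (preim j p).biUnion (preim i) := by
  ext x
  simp only [Finset.mem_biUnion, mem_preim]
  constructor
  · rintro ⟨u, hu, rfl⟩
    exact ⟨col i x, by unfold col at *; split_ifs at * <;> omega, rfl⟩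
  · rintro ⟨u, hu, rfl⟩
    exact ⟨col (j+1) x, by unfold col at *; split_ifs at * <;> omega, rfl⟩

lemma preim_lt {i p : ℕ} (h : p < i) : preim i p = {p} := by simp [preim, h]

lemma preim_self (i : ℕ) : preim i i = {i, i+1} := by simp [preim]

lemma preim_gt {i p : ℕ} (h : i < p) : preim i p = {p+1} := by
  rw [preim, if_neg (by omega), if_neg (by omega)]

lemma prod_pair' (f : ℕ → B) (x : ℕ) :
    ∏ v ∈ ({x, x+1} : Finset ℕ), f v = f x * f (x+1) :=
  Finset.prod_pair (by omega)

lemma gen_congr {m : ℕ} {a a' : ℕ → A} {β β' : ℕ → ℕ → B}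
    (hA : ∀ j, j < m → a j = a' j)
    (hB : ∀ p q, p < q → q < m → β p q = β' p q) :
    gen k A B m a β = gen k A B m a' β' := by
  unfold gen
  congr 1
  · exact congrArg _ (funext fun i => hA i.1 i.2)
  · refine congrArg _ (funext fun p => ?_)
    exact hB _ _ (by exact_mod_cast p.2) p.1.2.2

end Aux

section Ext

/-- Extension of a `Fin m`-indexed family to `ℕ`. -/
def extA (m : ℕ) (fA : Fin m → A) : ℕ → A :=
  fun j => if h : j < m then fA ⟨j, h⟩ else 1

/-- Extension of a `UT m`-indexed family to `ℕ × ℕ`. -/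
def extB (m : ℕ) (fB : UT m → B) : ℕ → ℕ → B :=
  fun p q => if h : p < m ∧ q < m ∧ p < q
    then fB ⟨(⟨p, h.1⟩, ⟨q, h.2.1⟩), by simpa [Fin.lt_def] using h.2.2⟩ else 1

lemma gen_ext (m : ℕ) (fA : Fin m → A) (fB : UT m → B) :
    gen k A B m (extA A m fA) (extB B m fB)
      = (tprod k fA) ⊗ₜ[k] (tprod k fB) := by
  unfold gen
  congr 1
  · refine congrArg _ (funext fun i => ?_)
    simp [extA]
  · refine congrArg _ (funext fun p => ?_)
    obtain ⟨⟨⟨pp, hp⟩, ⟨qq, hq⟩⟩, hlt⟩ := p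
    have hlt' : pp < qq := by simpa [Fin.lt_def] using hlt
    simp [extB, hp, hq, hlt']

lemma TS_ext {m : ℕ} {M : Type*} [AddCommGroup M] [Module k M]
    {f g : TS k A B m →ₗ[k] M}
    (h : ∀ a β, f (gen k A B m a β) = g (gen k A B m a β)) : f = g := by
  refine LinearMap.ext fun x => ?_
  have main : ∀ (x : ⨂[k] _ : Fin m, A),
      ∀ (y : ⨂[k] _ : UT m, B), f (x ⊗ₜ[k] y) = g (x ⊗ₜ[k] y) := by
    intro x
    induction x using PiTensorProduct.induction_on with
    | smul_tprod r fA =>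
      intro y
      induction y using PiTensorProduct.induction_on with
      | smul_tprod s fB =>
        have e : ((r • tprod k fA) ⊗ₜ[k] (s • tprod k fB) : TS k A B m)
            = (r * s) • ((tprod k fA) ⊗ₜ[k] (tprod k fB)) := by
          simp only [TensorProduct.smul_tmul', TensorProduct.tmul_smul, smul_smul, mul_comm]
        have h' := h (extA A m fA) (extB B m fB)
        rw [gen_ext] at h'
        rw [e]
        exact (f.map_smul (r*s) _).trans ((congrArg ((r*s) • ·) h').trans (g.map_smul _ _).symm)
      | add y1 y2 h1 h2 =>
        have e : ((r • tprod k fA) ⊗ₜ[k] (y1 + y2) : TS k A B m)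
            = (r • tprod k fA) ⊗ₜ[k] y1 + (r • tprod k fA) ⊗ₜ[k] y2 :=
          TensorProduct.tmul_add _ _ _
        rw [e]
        exact (f.map_add _ _).trans ((congrArg₂ (· + ·) h1 h2).trans (g.map_add _ _).symm)
    | add x1 x2 h1 h2 =>
      intro y
      have e : ((x1 + x2) ⊗ₜ[k] y : TS k A B m) = x1 ⊗ₜ[k] y + x2 ⊗ₜ[k] y :=
        TensorProduct.add_tmul _ _ _
      rw [e]
      exact (f.map_add _ _).trans ((congrArg₂ (· + ·) (h1 y) (h2 y)).trans (g.map_add _ _).symm)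
  induction x using TensorProduct.induction_on with
  | zero => exact (map_zero f).trans (map_zero g).symm
  | tmul x y => exact main x y
  | add x y hx hy => exact (f.map_add x y).trans ((congrArg₂ (· + ·) hx hy).trans (g.map_add x y).symm)

end Ext

section Rot

/-- Cyclic shift by `t` steps downwards modulo `n+1`. -/
def sig (n t j : ℕ) : ℕ := (j + t * n) % (n + 1)

lemma sig_lt (n t j : ℕ) : sig n t j < n + 1 := Nat.mod_lt _ (by omega)

lemma sig_zero {n j : ℕ} (h : j < n + 1) : sig n 0 j = j := by
  simp [sig, Nat.mod_eq_of_lt h]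

lemma sig_succ (n t j : ℕ) : sig n (t+1) j = (sig n t j + n) % (n + 1) := by
  rw [sig, sig, Nat.mod_add_mod, Nat.succ_mul, ← Nat.add_assoc]

lemma step_eq (n r : ℕ) (h : r < n + 1) :
    (r + n) % (n + 1) = if r = 0 then n else r - 1 := by
  split_ifs with h0
  · subst h0; simpa using Nat.mod_eq_of_lt (by omega)
  · have : r + n = (n + 1) + (r - 1) := by omega
    rw [this, Nat.add_mod_left, Nat.mod_eq_of_lt (by omega)]

lemma sig_inj {n t p q : ℕ} (hp : p < n + 1) (hq : q < n + 1)
    (h : sig n t p = sig n t q) : p = q := by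
  have h2 : p ≡ q [MOD n+1] := Nat.ModEq.add_right_cancel' (t * n) h
  have := h2.eq_of_lt_of_lt hp hq
  exact this

lemma sig_full {n j : ℕ} (h : j < n + 1) : sig n (n+1) j = j := by
  rw [sig, mul_comm, Nat.add_mul_mod_self_right, Nat.mod_eq_of_lt h]

lemma rotA_iter (n t : ℕ) (a : ℕ → A) :
    ∀ j, j < n + 1 → ((rotA A n)^[t] a) j = a (sig n t j) := by
  induction t generalizing a with
  | zero => intro j hj; simp [sig_zero hj]
  | succ t ih =>
    intro j hj
    rw [Function.iterate_succ_apply, ih (rotA A n a) j hj]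
    rw [rotA]
    have h1 := sig_lt n t j
    rw [show sig n (t+1) j = (sig n t j + n) % (n+1) from sig_succ n t j, step_eq n _ h1]
    split_ifs <;> rfl

lemma rotB_step (n : ℕ) (β : ℕ → ℕ → B) (x y : ℕ) (hxy : x < y) (hy : y < n + 1) :
    rotB B n β x y =
      if (x + n) % (n+1) < (y + n) % (n+1)
      then β ((x + n) % (n+1)) ((y + n) % (n+1))
      else β ((y + n) % (n+1)) ((x + n) % (n+1)) := by
  rw [rotB, step_eq n x (by omega), step_eq n y hy]
  split_ifs <;> first | rfl | omega

lemma rotB_iter (n t : ℕ) (β : ℕ → ℕ → B) :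
    ∀ p q, p < q → q < n + 1 → ((rotB B n)^[t] β) p q =
      if sig n t p < sig n t q then β (sig n t p) (sig n t q)
      else β (sig n t q) (sig n t p) := by
  induction t generalizing β with
  | zero =>
    intro p q hpq hq
    simp [sig_zero (show p < n+1 by omega), sig_zero hq, hpq]
  | succ t ih =>
    intro p q hpq hq
    rw [Function.iterate_succ_apply, ih (rotB B n β) p q hpq hq]
    have hp1 := sig_lt n t p
    have hq1 := sig_lt n t q
    have hne : sig n t p ≠ sig n t q := fun h => by
      have := sig_inj (show p < n+1 by omega) hq h; omega
    have hne2 : sig n (t+1) p ≠ sig n (t+1) q := fun h => by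
      have := sig_inj (show p < n+1 by omega) hq h; omega
    rw [sig_succ n t p, sig_succ n t q] at hne2 ⊢
    by_cases hlt : sig n t p < sig n t q
    · rw [if_pos hlt, rotB_step B n β _ _ hlt hq1]
    · rw [if_neg hlt, rotB_step B n β _ _ (by omega) hp1]
      split_ifs <;> first | rfl | omega

end Rot

section Eval

variable (ε : B →ₐ[k] A)

lemma mergeA_lt {i r : ℕ} (a : ℕ → A) (β : ℕ → ℕ → B) (h : r < i) :
    mergeA k A B ε i a β r = a r := if_pos h

lemma mergeA_self (i : ℕ) (a : ℕ → A) (β : ℕ → ℕ → B) :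
    mergeA k A B ε i a β i = a i * a (i+1) * ε (β i (i+1)) := by
  rw [mergeA, if_neg (by omega), if_pos rfl]

lemma mergeA_gt {i r : ℕ} (a : ℕ → A) (β : ℕ → ℕ → B) (h : i < r) :
    mergeA k A B ε i a β r = a (r+1) := by
  rw [mergeA, if_neg (by omega), if_neg (by omega)]

lemma cmergeA_zero (m : ℕ) (a : ℕ → A) (β : ℕ → ℕ → B) :
    cmergeA k A B ε m a β 0 = a m * a 0 * ε (β 0 m) := by rw [cmergeA, if_pos rfl]

lemma cmergeA_pos {r : ℕ} (m : ℕ) (a : ℕ → A) (β : ℕ → ℕ → B) (h : r ≠ 0) :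
    cmergeA k A B ε m a β r = a r := by rw [cmergeA, if_neg h]

lemma rotA_zero (n : ℕ) (a : ℕ → A) : rotA A n a 0 = a n := by rw [rotA, if_pos rfl]

lemma rotA_pos {r : ℕ} (n : ℕ) (a : ℕ → A) (h : r ≠ 0) : rotA A n a r = a (r-1) := by
  rw [rotA, if_neg h]

lemma cmergeB_zero (m q : ℕ) (β : ℕ → ℕ → B) :
    cmergeB B m β 0 q = β q m * β 0 q := by rw [cmergeB, if_pos rfl]

lemma cmergeB_pos {p : ℕ} (m q : ℕ) (β : ℕ → ℕ → B) (h : p ≠ 0) :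
    cmergeB B m β p q = β p q := by rw [cmergeB, if_neg h]

lemma rotB_zero (n q : ℕ) (β : ℕ → ℕ → B) : rotB B n β 0 q = β (q-1) n := by
  rw [rotB, if_pos rfl]

lemma rotB_pos {p : ℕ} (n q : ℕ) (β : ℕ → ℕ → B) (h : p ≠ 0) :
    rotB B n β p q = β (p-1) (q-1) := by rw [rotB, if_neg h]

lemma mergeB_s_s {i p q : ℕ} (β : ℕ → ℕ → B) (hp : p < i) (hq : q < i) :
    mergeB B i β p q = β p q := by
  rw [mergeB, preim_lt hp, preim_lt hq, Finset.prod_singleton, Finset.prod_singleton]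

lemma mergeB_s_m {i p : ℕ} (β : ℕ → ℕ → B) (hp : p < i) :
    mergeB B i β p i = β p i * β p (i+1) := by
  rw [mergeB, preim_lt hp, preim_self, Finset.prod_singleton, prod_pair' B]

lemma mergeB_s_g {i p q : ℕ} (β : ℕ → ℕ → B) (hp : p < i) (hq : i < q) :
    mergeB B i β p q = β p (q+1) := by
  rw [mergeB, preim_lt hp, preim_gt hq, Finset.prod_singleton, Finset.prod_singleton]

lemma mergeB_m_g {i q : ℕ} (β : ℕ → ℕ → B) (hq : i < q) :
    mergeB B i β i q = β i (q+1) * β (i+1) (q+1) := by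
  rw [mergeB, preim_self, preim_gt hq, prod_pair' B, Finset.prod_singleton,
    Finset.prod_singleton]

lemma mergeB_g_g {i p q : ℕ} (β : ℕ → ℕ → B) (hp : i < p) (hq : i < q) :
    mergeB B i β p q = β (p+1) (q+1) := by
  rw [mergeB, preim_gt hp, preim_gt hq, Finset.prod_singleton, Finset.prod_singleton]

end Eval

section Faces

variable (ε : B →ₐ[k] A)

lemma preim_pos {i p u : ℕ} (hp : 1 ≤ p) (hu : u ∈ preim i p) : u ≠ 0 := by
  rintro rfl
  have hcu := mem_preim.1 hu
  rw [col, if_pos (Nat.zero_le i)] at hcu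
  omega

lemma preim_shift {j p : ℕ} (hp : 1 ≤ p) :
    preim (j+1) p = (preim j (p-1)).image (· + 1) := by
  rcases lt_trichotomy p (j+1) with h | h | h
  · rw [preim_lt h, preim_lt (by omega), Finset.image_singleton]
    congr 1; omega
  · subst h
    rw [preim_self, show j + 1 - 1 = j from rfl, preim_self, Finset.image_insert,
      Finset.image_singleton]
  · rw [preim_gt h, preim_gt (by omega), Finset.image_singleton]
    congr 1; omega

lemma prod_shift (s : Finset ℕ) (f : ℕ → B) :
    ∏ u ∈ s.image (· + 1), f u = ∏ u ∈ s, f (u + 1) :=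
  Finset.prod_image (by intro x _ y _ h; exact Nat.succ_injective h)

/-- central rearrangement helper 1 -/
lemma helper1 (hcent : ∀ (b : B) (a : A), ε b * a = a * ε b) (p q r : A) (x y z : B) :
    p * (q * r * ε x) * ε (y * z) = p * q * ε y * r * ε (z * x) := by
  rw [_root_.map_mul, _root_.map_mul]
  rw [show p * q * ε y * r = p * q * r * ε y by rw [mul_assoc (p*q), hcent, ← mul_assoc]]
  simp only [mul_assoc]
  congr 3
  rw [← _root_.map_mul, ← _root_.map_mul, ← _root_.map_mul, ← _root_.map_mul]
  exact congrArg _ (by ring)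

/-- central rearrangement helper 2 -/
lemma helper2 (hcent : ∀ (b : B) (a : A), ε b * a = a * ε b) (p q r : A) (x y z : B) :
    (p * q * ε x) * r * ε (z * y) = p * (q * r * ε y) * ε (x * z) := by
  rw [_root_.map_mul, _root_.map_mul]
  rw [show p * q * ε x * r = p * q * r * ε x by rw [mul_assoc (p*q), hcent, ← mul_assoc]]
  simp only [mul_assoc]
  congr 3
  rw [← _root_.map_mul, ← _root_.map_mul, ← _root_.map_mul, ← _root_.map_mul]
  exact congrArg _ (by ring)

/-- simplicial relation, `A`-part -/
lemma L2A (hcent : ∀ (b : B) (a : A), ε b * a = a * ε b) {i j : ℕ} (hij : i ≤ j)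
    (a : ℕ → A) (β : ℕ → ℕ → B) (r : ℕ) :
    mergeA k A B ε i (mergeA k A B ε (j+1) a β) (mergeB B (j+1) β) r
      = mergeA k A B ε j (mergeA k A B ε i a β) (mergeB B i β) r := by
  rcases lt_trichotomy r i with h | rfl | h
  · rw [mergeA_lt k A B ε _ _ h, mergeA_lt k A B ε _ _ (by omega),
      mergeA_lt k A B ε _ _ (by omega), mergeA_lt k A B ε _ _ h]
  · rcases eq_or_lt_of_le hij with rfl | hij'
    · rw [mergeA_self, mergeA_lt k A B ε _ _ (by omega), mergeA_self,
        mergeB_s_m B _ (by omega), mergeA_self, mergeA_self,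
        mergeA_gt k A B ε _ _ (by omega), mergeB_m_g B _ (by omega)]
      exact helper1 k A B ε hcent _ _ _ _ _ _
    · rw [mergeA_self, mergeA_lt k A B ε _ _ (by omega),
        mergeA_lt k A B ε _ _ (by omega), mergeB_s_s B _ (by omega) (by omega),
        mergeA_lt k A B ε _ _ hij', mergeA_self]
  · rcases lt_trichotomy r j with h2 | rfl | h2
    · rw [mergeA_gt k A B ε _ _ h, mergeA_lt k A B ε _ _ (by omega),
        mergeA_lt k A B ε _ _ h2, mergeA_gt k A B ε _ _ h]
    · rw [mergeA_gt k A B ε _ _ h, mergeA_self, mergeA_self,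
        mergeA_gt k A B ε _ _ h, mergeA_gt k A B ε _ _ (by omega),
        mergeB_g_g B _ h (by omega)]
    · rw [mergeA_gt k A B ε _ _ h, mergeA_gt k A B ε _ _ (by omega),
        mergeA_gt k A B ε _ _ h2, mergeA_gt k A B ε _ _ (by omega)]

/-- simplicial relation, `B`-part -/
lemma L2B {i j : ℕ} (hij : i ≤ j) (β : ℕ → ℕ → B) (p q : ℕ) :
    mergeB B i (mergeB B (j+1) β) p q = mergeB B j (mergeB B i β) p q := by
  rw [mergeB_mergeB, mergeB_mergeB, biUnion_preim i j hij, biUnion_preim i j hij]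

/-- merge commutes with the cyclic face, `A`-part -/
lemma L3A (hcent : ∀ (b : B) (a : A), ε b * a = a * ε b) {n i : ℕ} (hi : i ≤ n)
    (a : ℕ → A) (β : ℕ → ℕ → B) (r : ℕ) :
    mergeA k A B ε i (cmergeA k A B ε (n+2) a β) (cmergeB B (n+2) β) r
      = cmergeA k A B ε (n+1) (mergeA k A B ε i a β) (mergeB B i β) r := by
  by_cases hr : r = 0
  · subst hr
    by_cases hi0 : i = 0
    · subst hi0
      rw [mergeA_self, cmergeA_zero, cmergeA_pos k A B ε _ _ _ (by omega),
        cmergeB_zero, cmergeA_zero, mergeA_gt k A B ε _ _ (by omega), mergeA_self,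
        mergeB_m_g B _ (by omega)]
      exact helper2 k A B ε hcent _ _ _ _ _ _
    · rw [mergeA_lt k A B ε _ _ (by omega), cmergeA_zero, cmergeA_zero,
        mergeA_gt k A B ε _ _ (by omega), mergeA_lt k A B ε _ _ (by omega),
        mergeB_s_g B _ (by omega) (by omega)]
  · rcases lt_trichotomy r i with h | rfl | h
    · rw [mergeA_lt k A B ε _ _ h, cmergeA_pos k A B ε _ _ _ hr,
        cmergeA_pos k A B ε _ _ _ hr, mergeA_lt k A B ε _ _ h]
    · rw [mergeA_self, cmergeA_pos k A B ε _ _ _ hr,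
        cmergeA_pos k A B ε _ _ _ (by omega), cmergeB_pos B _ _ _ hr,
        cmergeA_pos k A B ε _ _ _ hr, mergeA_self]
    · rw [mergeA_gt k A B ε _ _ h, cmergeA_pos k A B ε _ _ _ (by omega),
        cmergeA_pos k A B ε _ _ _ hr, mergeA_gt k A B ε _ _ h]

/-- merge commutes with the cyclic face, `B`-part -/
lemma L3B {n i : ℕ} (hi : i ≤ n) (β : ℕ → ℕ → B) (p q : ℕ) (hpq : p < q) :
    mergeB B i (cmergeB B (n+2) β) p q
      = cmergeB B (n+1) (mergeB B i β) p q := by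
  by_cases hp : p = 0
  · subst hp
    rw [cmergeB_zero]
    by_cases hi0 : i = 0
    · subst hi0
      simp only [mergeB, preim_self, preim_gt hpq, preim_gt (show (0:ℕ) < n+1 by omega),
        prod_pair' B, Finset.prod_singleton]
      rw [cmergeB_zero B (n+2) (q+1) β, cmergeB_pos B (n+2) (q+1) β (by omega)]
      ring
    · simp only [mergeB, preim_lt (show (0:ℕ) < i by omega),
        preim_gt (show i < n+1 by omega), Finset.prod_singleton]
      rw [Finset.prod_congr rfl fun v _ => cmergeB_zero B (n+2) v β,
        Finset.prod_mul_distrib]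
  · simp only [mergeB]
    rw [Finset.prod_congr rfl fun u hu => Finset.prod_congr rfl fun v _ =>
      cmergeB_pos B _ _ _ (preim_pos (by omega) hu)]
    rw [cmergeB_pos B _ _ _ hp]
    rfl

/-- cyclic face twice = cyclic face after top merge, `A`-part (window `n+1`) -/
lemma L4A (hcent : ∀ (b : B) (a : A), ε b * a = a * ε b) {n : ℕ}
    (a : ℕ → A) (β : ℕ → ℕ → B) (r : ℕ) (hr : r < n+1) :
    cmergeA k A B ε (n+1) (cmergeA k A B ε (n+2) a β) (cmergeB B (n+2) β) r
      = cmergeA k A B ε (n+1) (mergeA k A B ε (n+1) a β) (mergeB B (n+1) β) r := by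
  by_cases h0 : r = 0
  · subst h0
    rw [cmergeA_zero, cmergeA_zero, cmergeA_pos k A B ε _ _ _ (by omega),
      cmergeB_zero, cmergeA_zero, mergeA_self, mergeA_lt k A B ε _ _ (by omega),
      mergeB_s_m B _ (by omega)]
    exact helper1 k A B ε hcent _ _ _ _ _ _
  · rw [cmergeA_pos k A B ε _ _ _ h0, cmergeA_pos k A B ε _ _ _ h0,
      cmergeA_pos k A B ε _ _ _ h0, mergeA_lt k A B ε _ _ (by omega)]

/-- cyclic face twice = cyclic face after top merge, `B`-part (window `n+1`) -/
lemma L4B {n : ℕ} (β : ℕ → ℕ → B) (p q : ℕ) (hpq : p < q) (hq : q < n+1) :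
    cmergeB B (n+1) (cmergeB B (n+2) β) p q
      = cmergeB B (n+1) (mergeB B (n+1) β) p q := by
  by_cases hp : p = 0
  · subst hp
    rw [cmergeB_zero B (n+1) q (cmergeB B (n+2) β),
      cmergeB_zero B (n+1) q (mergeB B (n+1) β),
      cmergeB_pos B (n+2) (n+1) β (by omega), cmergeB_zero B (n+2) q β,
      mergeB_s_m B _ (by omega), mergeB_s_s B _ (by omega) (by omega)]
    ring
  · rw [cmergeB_pos B _ _ _ hp, cmergeB_pos B _ _ _ hp, cmergeB_pos B _ _ _ hp,
      mergeB_s_s B _ (by omega) (by omega)]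

/-- rotation relation for inner merges, `A`-part -/
lemma L5A {n j : ℕ} (hj : j + 1 ≤ n) (a : ℕ → A) (β : ℕ → ℕ → B) (r : ℕ) :
    mergeA k A B ε (j+1) (rotA A (n+1) a) (rotB B (n+1) β) r
      = rotA A n (mergeA k A B ε j a β) r := by
  by_cases h0 : r = 0
  · subst h0
    rw [mergeA_lt k A B ε _ _ (by omega), rotA_zero, rotA_zero,
      mergeA_gt k A B ε _ _ (by omega)]
  · rcases lt_trichotomy r (j+1) with h | rfl | h
    · rw [mergeA_lt k A B ε _ _ h, rotA_pos A _ _ h0, rotA_pos A _ _ h0,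
        mergeA_lt k A B ε _ _ (by omega)]
    · rw [mergeA_self, rotA_pos A _ _ (by omega), rotA_pos A _ _ (by omega),
        rotB_pos B _ _ _ (by omega), rotA_pos A _ _ h0]
      simp only [Nat.add_sub_cancel]
      rw [mergeA_self]
    · rw [mergeA_gt k A B ε _ _ h, rotA_pos A _ _ (by omega), rotA_pos A _ _ h0,
        mergeA_gt k A B ε _ _ (by omega)]
      simp only [Nat.add_sub_cancel]
      congr 1
      omega

/-- rotation relation for inner merges, `B`-part -/
lemma L5B {n j : ℕ} (hj : j + 1 ≤ n) (β : ℕ → ℕ → B) (p q : ℕ) (hpq : p < q) :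
    mergeB B (j+1) (rotB B (n+1) β) p q
      = rotB B n (mergeB B j β) p q := by
  by_cases hp : p = 0
  · subst hp
    rw [rotB_zero]
    simp only [mergeB, preim_lt (show (0:ℕ) < j+1 by omega), Finset.prod_singleton]
    rcases lt_trichotomy q (j+1) with h | rfl | h
    · rw [preim_lt h, Finset.prod_singleton, rotB_zero,
        preim_lt (show q-1 < j by omega), preim_gt (show j < n by omega),
        Finset.prod_singleton, Finset.prod_singleton]
    · rw [preim_self, prod_pair' B, rotB_zero, rotB_zero]
      simp only [Nat.add_sub_cancel]
      rw [preim_self, preim_gt (show j < n by omega), prod_pair' B]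
      simp only [Finset.prod_singleton]
    · rw [preim_gt h, Finset.prod_singleton, rotB_zero]
      simp only [Nat.add_sub_cancel]
      rw [preim_gt (show j < q - 1 by omega), preim_gt (show j < n by omega),
        Finset.prod_singleton, Finset.prod_singleton]
      congr 1
      omega
  · rw [rotB_pos B _ _ _ hp]
    simp only [mergeB, preim_shift (show 1 ≤ p by omega),
      preim_shift (show 1 ≤ q by omega), prod_shift B]
    refine Finset.prod_congr rfl fun u _ => Finset.prod_congr rfl fun v _ => ?_
    rw [rotB_pos B _ _ _ (by omega)]
    simp only [Nat.add_sub_cancel]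

/-- rotation sends merge₀ to the cyclic face, `A`-part -/
lemma L6A {n : ℕ} (a : ℕ → A) (β : ℕ → ℕ → B) (r : ℕ) :
    mergeA k A B ε 0 (rotA A (n+1) a) (rotB B (n+1) β) r
      = cmergeA k A B ε (n+1) a β r := by
  by_cases h0 : r = 0
  · subst h0
    rw [mergeA_self, rotA_zero, rotA_pos A _ _ (by omega), rotB_zero,
      cmergeA_zero]
  · rw [mergeA_gt k A B ε _ _ (by omega), rotA_pos A _ _ (by omega),
      cmergeA_pos k A B ε _ _ _ h0]
    simp only [Nat.add_sub_cancel]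

/-- rotation sends merge₀ to the cyclic face, `B`-part -/
lemma L6B {n : ℕ} (β : ℕ → ℕ → B) (p q : ℕ) (hpq : p < q) :
    mergeB B 0 (rotB B (n+1) β) p q = cmergeB B (n+1) β p q := by
  by_cases hp : p = 0
  · subst hp
    rw [cmergeB_zero]
    simp only [mergeB, preim_self, preim_gt hpq, prod_pair' B, Finset.prod_singleton]
    rw [rotB_zero, rotB_pos B _ _ _ (by omega)]
    simp only [Nat.add_sub_cancel]
  · rw [cmergeB_pos B _ _ _ hp]
    simp only [mergeB, preim_gt (show (0:ℕ) < p by omega), preim_gt (show (0:ℕ) < q by omega),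
      Finset.prod_singleton]
    rw [rotB_pos B _ _ _ (by omega)]
    simp only [Nat.add_sub_cancel]

/-- rotation sends the cyclic face to the top merge, `A`-part (window `n+1`) -/
lemma L7A {n : ℕ} (a : ℕ → A) (β : ℕ → ℕ → B) (r : ℕ) (hr : r < n+1) :
    cmergeA k A B ε (n+1) (rotA A (n+1) a) (rotB B (n+1) β) r
      = rotA A n (mergeA k A B ε n a β) r := by
  by_cases h0 : r = 0
  · subst h0
    rw [cmergeA_zero, rotA_zero, rotA_pos A _ _ (by omega), rotB_zero, rotA_zero,
      mergeA_self]
    simp only [Nat.add_sub_cancel]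
  · rw [cmergeA_pos k A B ε _ _ _ h0, rotA_pos A _ _ h0, rotA_pos A _ _ h0,
      mergeA_lt k A B ε _ _ (by omega)]

/-- rotation sends the cyclic face to the top merge, `B`-part (window `n+1`) -/
lemma L7B {n : ℕ} (β : ℕ → ℕ → B) (p q : ℕ) (hpq : p < q) (hq : q < n+1) :
    cmergeB B (n+1) (rotB B (n+1) β) p q
      = rotB B n (mergeB B n β) p q := by
  by_cases hp : p = 0
  · subst hp
    rw [cmergeB_zero, rotB_zero, rotB_pos B _ _ _ (by omega), rotB_zero,
      mergeB_s_m B _ (by omega)]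
    simp only [Nat.add_sub_cancel]
  · rw [cmergeB_pos B _ _ _ hp, rotB_pos B _ _ _ hp, rotB_pos B _ _ _ hp,
      mergeB_s_s B _ (by omega) (by omega)]
end Faces

section Composite

variable (ε : B →ₐ[k] A)

lemma rotA_iter_congr {n : ℕ} (t : ℕ) {a a' : ℕ → A}
    (h : ∀ r, r < n+1 → a r = a' r) :
    ∀ r, r < n+1 → (rotA A n)^[t] a r = (rotA A n)^[t] a' r := by
  intro r hr
  rw [rotA_iter A n t a r hr, rotA_iter A n t a' r hr]
  exact h _ (sig_lt n t r)

lemma rotB_iter_congr {n : ℕ} (t : ℕ) {β β' : ℕ → ℕ → B}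
    (h : ∀ p q, p < q → q < n+1 → β p q = β' p q) :
    ∀ p q, p < q → q < n+1 → (rotB B n)^[t] β p q = (rotB B n)^[t] β' p q := by
  intro p q hpq hq
  rw [rotB_iter B n t β p q hpq hq, rotB_iter B n t β' p q hpq hq]
  have h1 := sig_lt n t p
  have h2 := sig_lt n t q
  have hne : sig n t p ≠ sig n t q := fun hh => by
    have := sig_inj (show p < n+1 by omega) hq hh; omega
  split_ifs with hlt
  · exact h _ _ hlt h2
  · exact h _ _ (by omega) h1

/-- iterated rotation through merges, `A`-part -/
lemma L8aA {n : ℕ} (s : ℕ) (hs : s ≤ n) (j : ℕ) :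
    ∀ (a : ℕ → A) (β : ℕ → ℕ → B), j ≤ s → ∀ r, r < n+1 →
      mergeA k A B ε s ((rotA A (n+1))^[j] a) ((rotB B (n+1))^[j] β) r
        = (rotA A n)^[j] (mergeA k A B ε (s - j) a β) r := by
  induction j with
  | zero => intro a β _ r _; simp
  | succ j ih =>
    intro a β hjs r hr
    rw [Function.iterate_succ_apply, Function.iterate_succ_apply]
    rw [ih (rotA A (n+1) a) (rotB B (n+1) β) (by omega) r hr]
    have e : s - j = (s - (j+1)) + 1 := by omega
    refine rotA_iter_congr A j (fun r' hr' => ?_) r hr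
    rw [e]
    exact L5A k A B ε (by omega) a β r'

/-- iterated rotation through merges, `B`-part -/
lemma L8aB {n : ℕ} (s : ℕ) (hs : s ≤ n) (j : ℕ) :
    ∀ (β : ℕ → ℕ → B), j ≤ s → ∀ p q, p < q → q < n+1 →
      mergeB B s ((rotB B (n+1))^[j] β) p q
        = (rotB B n)^[j] (mergeB B (s - j) β) p q := by
  induction j with
  | zero => intro β _ p q _ _; simp
  | succ j ih =>
    intro β hjs p q hpq hq
    rw [Function.iterate_succ_apply, Function.iterate_succ_apply]
    rw [ih (rotB B (n+1) β) (by omega) p q hpq hq]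
    have e : s - j = (s - (j+1)) + 1 := by omega
    refine rotB_iter_congr B j (fun p' q' hpq' _ => ?_) p q hpq hq
    rw [e]
    exact L5B B (by omega) β p' q' hpq'

/-- `merge_s ∘ rot^[s+1] = rot^[s] ∘ cyclic face`, `A`-part -/
lemma L8bA {n : ℕ} (s : ℕ) (hs : s ≤ n) (a : ℕ → A) (β : ℕ → ℕ → B) :
    ∀ r, r < n+1 →
      mergeA k A B ε s ((rotA A (n+1))^[s+1] a) ((rotB B (n+1))^[s+1] β) r
        = (rotA A n)^[s] (cmergeA k A B ε (n+1) a β) r := by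
  intro r hr
  rw [Function.iterate_succ_apply, Function.iterate_succ_apply]
  rw [L8aA k A B ε s hs s (rotA A (n+1) a) (rotB B (n+1) β) le_rfl r hr]
  refine rotA_iter_congr A s (fun r' hr' => ?_) r hr
  rw [Nat.sub_self]
  exact L6A k A B ε a β r'

/-- `merge_s ∘ rot^[s+1] = rot^[s] ∘ cyclic face`, `B`-part -/
lemma L8bB {n : ℕ} (s : ℕ) (hs : s ≤ n) (β : ℕ → ℕ → B) :
    ∀ p q, p < q → q < n+1 →
      mergeB B s ((rotB B (n+1))^[s+1] β) p q
        = (rotB B n)^[s] (cmergeB B (n+1) β) p q := by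
  intro p q hpq hq
  rw [Function.iterate_succ_apply]
  rw [L8aB B s hs s (rotB B (n+1) β) le_rfl p q hpq hq]
  refine rotB_iter_congr B s (fun p' q' hpq' _ => ?_) p q hpq hq
  rw [Nat.sub_self]
  exact L6B B β p' q' hpq'

/-- iterated rotation through the cyclic face, `A`-part -/
lemma L7itA {n : ℕ} (w : ℕ) :
    ∀ (a : ℕ → A) (β : ℕ → ℕ → B), 1 ≤ w → w ≤ n+1 → ∀ r, r < n+1 →
      cmergeA k A B ε (n+1) ((rotA A (n+1))^[w] a) ((rotB B (n+1))^[w] β) r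
        = (rotA A n)^[w] (mergeA k A B ε (n+1-w) a β) r := by
  induction w with
  | zero => intro _ _ h; omega
  | succ w ih =>
    intro a β _ hw r hr
    by_cases hw0 : w = 0
    · subst hw0
      simp only [Nat.zero_add, Function.iterate_one]
      exact L7A k A B ε a β r hr
    · rw [Function.iterate_succ_apply, Function.iterate_succ_apply]
      rw [ih (rotA A (n+1) a) (rotB B (n+1) β) (by omega) (by omega) r hr]
      have e : n + 1 - w = (n + 1 - (w+1)) + 1 := by omega
      refine rotA_iter_congr A w (fun r' hr' => ?_) r hr
      rw [e]
      exact L5A k A B ε (by omega) a β r'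

/-- iterated rotation through the cyclic face, `B`-part -/
lemma L7itB {n : ℕ} (w : ℕ) :
    ∀ (β : ℕ → ℕ → B), 1 ≤ w → w ≤ n+1 → ∀ p q, p < q → q < n+1 →
      cmergeB B (n+1) ((rotB B (n+1))^[w] β) p q
        = (rotB B n)^[w] (mergeB B (n+1-w) β) p q := by
  induction w with
  | zero => intro _ h; omega
  | succ w ih =>
    intro β _ hw p q hpq hq
    by_cases hw0 : w = 0
    · subst hw0
      simp only [Nat.zero_add, Function.iterate_one]
      exact L7B B β p q hpq hq
    · rw [Function.iterate_succ_apply, Function.iterate_succ_apply]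
      rw [ih (rotB B (n+1) β) (by omega) (by omega) p q hpq hq]
      have e : n + 1 - w = (n + 1 - (w+1)) + 1 := by omega
      refine rotB_iter_congr B w (fun p' q' hpq' _ => ?_) p q hpq hq
      rw [e]
      exact L5B B (by omega) β p' q' hpq'

/-- the overflow case: `merge_s ∘ rot^[j] = rot^[j-1] ∘ merge_{n+2+s-j}` for `j ≥ s+2`, `A`-part -/
lemma L8cA {n : ℕ} (s j : ℕ) (hs : s ≤ n) (hj1 : s + 2 ≤ j) (hj2 : j ≤ n+1)
    (a : ℕ → A) (β : ℕ → ℕ → B) :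
    ∀ r, r < n+1 →
      mergeA k A B ε s ((rotA A (n+1))^[j] a) ((rotB B (n+1))^[j] β) r
        = (rotA A n)^[j-1] (mergeA k A B ε (n+2+s-j) a β) r := by
  obtain ⟨w, rfl⟩ : ∃ w, j = (s+1) + (w+1) := ⟨j - s - 2, by omega⟩
  intro r hr
  rw [Function.iterate_add_apply (rotA A (n+1)) (s+1) (w+1) a,
    Function.iterate_add_apply (rotB B (n+1)) (s+1) (w+1) β]
  rw [L8bA k A B ε s hs ((rotA A (n+1))^[w+1] a) ((rotB B (n+1))^[w+1] β) r hr]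
  have step : ∀ r', r' < n+1 →
      cmergeA k A B ε (n+1) ((rotA A (n+1))^[w+1] a) ((rotB B (n+1))^[w+1] β) r'
        = (rotA A n)^[w+1] (mergeA k A B ε (n+1-(w+1)) a β) r' :=
    L7itA k A B ε (w+1) a β (by omega) (by omega)
  rw [rotA_iter_congr A s step r hr]
  rw [← Function.iterate_add_apply]
  have e1 : s + (w + 1) = (s+1) + (w+1) - 1 := by omega
  have e2 : n + 1 - (w+1) = n + 2 + s - ((s+1)+(w+1)) := by omega
  rw [e1, e2]

/-- the overflow case, `B`-part -/
lemma L8cB {n : ℕ} (s j : ℕ) (hs : s ≤ n) (hj1 : s + 2 ≤ j) (hj2 : j ≤ n+1)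
    (β : ℕ → ℕ → B) :
    ∀ p q, p < q → q < n+1 →
      mergeB B s ((rotB B (n+1))^[j] β) p q
        = (rotB B n)^[j-1] (mergeB B (n+2+s-j) β) p q := by
  obtain ⟨w, rfl⟩ : ∃ w, j = (s+1) + (w+1) := ⟨j - s - 2, by omega⟩
  intro p q hpq hq
  rw [Function.iterate_add_apply (rotB B (n+1)) (s+1) (w+1) β]
  rw [L8bB B s hs ((rotB B (n+1))^[w+1] β) p q hpq hq]
  have step : ∀ p' q', p' < q' → q' < n+1 →
      cmergeB B (n+1) ((rotB B (n+1))^[w+1] β) p' q'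
        = (rotB B n)^[w+1] (mergeB B (n+1-(w+1)) β) p' q' :=
    L7itB B (w+1) β (by omega) (by omega)
  rw [rotB_iter_congr B s (fun p' q' h1 h2 => step p' q' h1 h2) p q hpq hq]
  rw [← Function.iterate_add_apply]
  have e1 : s + (w + 1) = (s+1) + (w+1) - 1 := by omega
  have e2 : n + 1 - (w+1) = n + 2 + s - ((s+1)+(w+1)) := by omega
  rw [e1, e2]

end Composite

section FacesGen

variable (ε : B →ₐ[k] A)

/-- The `i`-th face (diagonal part) of size `m+1 → m`: merge for `i < m`, cyclic for `i = m`. -/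
def faceA (m i : ℕ) (a : ℕ → A) (β : ℕ → ℕ → B) : ℕ → A :=
  if i < m then mergeA k A B ε i a β else cmergeA k A B ε m a β

/-- The `i`-th face (`B`-matrix part). -/
def faceB (m i : ℕ) (β : ℕ → ℕ → B) : ℕ → ℕ → B :=
  if i < m then mergeB B i β else cmergeB B m β

lemma faceA_lt {m i : ℕ} (h : i < m) (a : ℕ → A) (β : ℕ → ℕ → B) :
    faceA k A B ε m i a β = mergeA k A B ε i a β := if_pos h

lemma faceA_ge {m i : ℕ} (h : ¬ i < m) (a : ℕ → A) (β : ℕ → ℕ → B) :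
    faceA k A B ε m i a β = cmergeA k A B ε m a β := if_neg h

lemma faceB_lt {m i : ℕ} (h : i < m) (β : ℕ → ℕ → B) :
    faceB B m i β = mergeB B i β := if_pos h

lemma faceB_ge {m i : ℕ} (h : ¬ i < m) (β : ℕ → ℕ → B) :
    faceB B m i β = cmergeB B m β := if_neg h

/-- The simplicial commutation of all faces (including cyclic), at the level of generators. -/
lemma keyface (hcent : ∀ (b : B) (a : A), ε b * a = a * ε b) {n : ℕ} (i j : ℕ)
    (hji : j < i) (hi : i ≤ n+2) (hj : j ≤ n+1) (a : ℕ → A) (β : ℕ → ℕ → B) :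
    gen k A B (n+1) (faceA k A B ε (n+1) j (faceA k A B ε (n+2) i a β) (faceB B (n+2) i β))
        (faceB B (n+1) j (faceB B (n+2) i β))
      = gen k A B (n+1) (faceA k A B ε (n+1) (i-1) (faceA k A B ε (n+2) j a β) (faceB B (n+2) j β))
        (faceB B (n+1) (i-1) (faceB B (n+2) j β)) := by
  by_cases hi' : i < n + 2
  · -- both plain merges
    obtain ⟨i', rfl⟩ : ∃ i', i = i' + 1 := ⟨i - 1, by omega⟩
    rw [faceA_lt k A B ε hi', faceB_lt B hi', faceA_lt k A B ε (show j < n+1 by omega),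
      faceB_lt B (show j < n+1 by omega), faceA_lt k A B ε (show j < n+2 by omega),
      faceB_lt B (show j < n+2 by omega), Nat.add_sub_cancel,
      faceA_lt k A B ε (show i' < n+1 by omega), faceB_lt B (show i' < n+1 by omega)]
    exact gen_congr k A B (fun r _ => L2A k A B ε hcent (by omega) a β r)
      (fun p q _ _ => L2B B (by omega) β p q)
  · have hi2 : i = n + 2 := by omega
    subst hi2
    by_cases hj' : j < n + 1
    · -- L3
      rw [faceA_ge k A B ε (show ¬ n+2 < n+2 by omega), faceB_ge B (show ¬ n+2 < n+2 by omega),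
        faceA_lt k A B ε hj', faceB_lt B hj', show n+2-1 = n+1 from rfl,
        faceA_ge k A B ε (show ¬ n+1 < n+1 by omega), faceB_ge B (show ¬ n+1 < n+1 by omega),
        faceA_lt k A B ε (show j < n+2 by omega), faceB_lt B (show j < n+2 by omega)]
      exact gen_congr k A B (fun r _ => L3A k A B ε hcent (by omega) a β r)
        (fun p q hpq _ => L3B B (by omega) β p q hpq)
    · have hj2 : j = n + 1 := by omega
      subst hj2
      rw [faceA_ge k A B ε (show ¬ n+2 < n+2 by omega), faceB_ge B (show ¬ n+2 < n+2 by omega),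
        show n+2-1 = n+1 from rfl,
        faceA_lt k A B ε (show n+1 < n+2 by omega), faceB_lt B (show n+1 < n+2 by omega),
        faceA_ge k A B ε (show ¬ n+1 < n+1 by omega), faceB_ge B (show ¬ n+1 < n+1 by omega),
        faceA_ge k A B ε (show ¬ n+1 < n+1 by omega), faceB_ge B (show ¬ n+1 < n+1 by omega)]
      exact gen_congr k A B (fun r hr => L4A k A B ε hcent a β r hr)
        (fun p q hpq hq => L4B B β p q hpq hq)

end FacesGen

section SumTools

lemma m1pow_congr {s t : ℕ} (h : s % 2 = t % 2) : ((-1 : ℤ)) ^ s = (-1) ^ t := by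
  conv_lhs => rw [← Nat.div_add_mod s 2, pow_add, pow_mul, neg_one_sq, one_pow, one_mul]
  conv_rhs => rw [← Nat.div_add_mod t 2, pow_add, pow_mul, neg_one_sq, one_pow, one_mul]
  rw [h]

lemma simplicial_cancel {M : Type*} [AddCommGroup M] (m : ℕ) (K : ℕ → ℕ → M)
    (hK : ∀ i j, j < i → i ≤ m + 1 → j ≤ m → K i j = K j (i-1)) :
    ∑ p ∈ Finset.range (m+2) ×ˢ Finset.range (m+1), ((-1:ℤ)^(p.1+p.2)) • K p.1 p.2 = 0 := by
  refine Finset.sum_involution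
    (fun p _ => if p.2 < p.1 then (p.2, p.1 - 1) else (p.2+1, p.1)) ?_ ?_ ?_ ?_
  · intro p hp
    simp only [Finset.mem_product, Finset.mem_range] at hp
    by_cases h : p.2 < p.1
    · rw [if_pos h, hK p.1 p.2 h (by omega) (by omega)]
      have e : ((-1:ℤ)^(p.1+p.2)) = -((-1:ℤ)^((p.2, p.1-1).1 + (p.2, p.1-1).2)) := by
        have h2 : p.1 + p.2 = (p.2 + (p.1-1)) + 1 := by omega
        rw [h2, pow_succ]; ring_nf
      rw [e, neg_smul, neg_add_cancel]
    · rw [if_neg h]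
      have e := hK (p.2+1) p.1 (by omega) (by omega) (by omega)
      rw [show p.2 + 1 - 1 = p.2 from rfl] at e
      have e2 : ((-1:ℤ)^((p.2+1, p.1).1 + (p.2+1, p.1).2)) = -((-1:ℤ)^(p.1 + p.2)) := by
        rw [show p.2+1+p.1 = (p.1+p.2)+1 by omega, pow_succ]; ring_nf
      rw [e, e2, neg_smul, add_neg_cancel]
  · intro p hp _
    by_cases h : p.2 < p.1
    · rw [if_pos h]; intro hco; rw [Prod.ext_iff] at hco
      simp only at hco; omega
    · rw [if_neg h]; intro hco; rw [Prod.ext_iff] at hco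
      simp only at hco; omega
  · intro p hp
    simp only [Finset.mem_product, Finset.mem_range] at hp ⊢
    by_cases h : p.2 < p.1
    · rw [if_pos h]; exact ⟨by omega, by omega⟩
    · rw [if_neg h]; exact ⟨by omega, by omega⟩
  · intro p hp
    by_cases h : p.2 < p.1
    · rw [if_pos h, if_neg (show ¬((p.2, p.1-1).2 < (p.2, p.1-1).1) by simp only; omega)]
      simp only [Prod.ext_iff]
      constructor <;> first | trivial | omega
    · rw [if_neg h, if_pos (show ((p.2+1, p.1).2 < (p.2+1, p.1).1) by simp only; omega)]
      simp only [Prod.ext_iff]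
      constructor <;> first | trivial | omega

end SumTools

section LamPow

lemma lam_pow {n : ℕ} (lam : Module.End k (TS k A B (n+1)))
    (hlam : ∀ (a : ℕ → A) (β : ℕ → ℕ → B), lam (gen k A B (n + 1) a β) =
      (-1 : ℤ) ^ n • gen k A B (n + 1) (rotA A n a) (rotB B n β)) :
    ∀ (t : ℕ) (a : ℕ → A) (β : ℕ → ℕ → B),
      (lam ^ t) (gen k A B (n+1) a β)
        = (-1:ℤ)^(n*t) • gen k A B (n+1) ((rotA A n)^[t] a) ((rotB B n)^[t] β) := by
  intro t
  induction t with
  | zero => intro a β; simp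
  | succ t ih =>
    intro a β
    rw [pow_succ', Module.End.mul_apply, ih a β, map_zsmul, hlam, smul_smul, ← pow_add,
      Function.iterate_succ_apply', Function.iterate_succ_apply', Nat.mul_succ]

end LamPow

section GenLevel

variable (ε : B →ₐ[k] A)

lemma gen_rot_order {n : ℕ} (a : ℕ → A) (β : ℕ → ℕ → B) :
    gen k A B (n+1) ((rotA A n)^[n+1] a) ((rotB B n)^[n+1] β) = gen k A B (n+1) a β := by
  refine gen_congr k A B (fun r hr => ?_) (fun p q hpq hq => ?_)
  · rw [rotA_iter A n (n+1) a r hr, sig_full hr]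
  · rw [rotB_iter B n (n+1) β p q hpq hq, sig_full (show p < n+1 by omega), sig_full hq,
      if_pos hpq]

lemma genL5 {n j : ℕ} (hj : j + 1 ≤ n) (a : ℕ → A) (β : ℕ → ℕ → B) :
    gen k A B (n+1) (mergeA k A B ε (j+1) (rotA A (n+1) a) (rotB B (n+1) β))
        (mergeB B (j+1) (rotB B (n+1) β))
      = gen k A B (n+1) (rotA A n (mergeA k A B ε j a β)) (rotB B n (mergeB B j β)) :=
  gen_congr k A B (fun r _ => L5A k A B ε hj a β r)
    (fun p q hpq _ => L5B B hj β p q hpq)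

lemma genL6 {n : ℕ} (a : ℕ → A) (β : ℕ → ℕ → B) :
    gen k A B (n+1) (mergeA k A B ε 0 (rotA A (n+1) a) (rotB B (n+1) β))
        (mergeB B 0 (rotB B (n+1) β))
      = gen k A B (n+1) (cmergeA k A B ε (n+1) a β) (cmergeB B (n+1) β) :=
  gen_congr k A B (fun r _ => L6A k A B ε a β r) (fun p q hpq _ => L6B B β p q hpq)

lemma genL7 {n : ℕ} (a : ℕ → A) (β : ℕ → ℕ → B) :
    gen k A B (n+1) (cmergeA k A B ε (n+1) (rotA A (n+1) a) (rotB B (n+1) β))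
        (cmergeB B (n+1) (rotB B (n+1) β))
      = gen k A B (n+1) (rotA A n (mergeA k A B ε n a β)) (rotB B n (mergeB B n β)) :=
  gen_congr k A B (fun r hr => L7A k A B ε a β r hr) (fun p q hpq hq => L7B B β p q hpq hq)

/-- The reindexing map for `N b = b' N` (first component). -/
def Phi1 (j s : ℕ) : ℕ :=
  if j ≤ s then j else if j = s + 1 then s else j - 1

/-- The reindexing map for `N b = b' N` (second component). -/
def Phi2 (n j s : ℕ) : ℕ :=
  if j ≤ s then s - j else if j = s + 1 then n+1 else n+2+s-j

/-- Inverse of `Phi` (first component). -/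
def Psi1 (n t i : ℕ) : ℕ :=
  if i = n+1 then t+1 else if i + t ≤ n then t else t+1

/-- Inverse of `Psi` (second component). -/
def Psi2 (n t i : ℕ) : ℕ :=
  if i = n+1 then t else if i + t ≤ n then i+t else i+t-n-1

lemma Phi_mem {n j s : ℕ} (hj : j ≤ n+1) (hs : s ≤ n) :
    Phi1 j s < n+1 ∧ Phi2 n j s < n+2 := by
  unfold Phi1 Phi2; split_ifs <;> omega

lemma Psi_mem {n t i : ℕ} (ht : t ≤ n) (hi : i ≤ n+1) :
    Psi1 n t i < n+2 ∧ Psi2 n t i < n+1 := by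
  unfold Psi1 Psi2; split_ifs <;> omega

lemma Psi_Phi1 {n j s : ℕ} (hj : j ≤ n+1) (hs : s ≤ n) :
    Psi1 n (Phi1 j s) (Phi2 n j s) = j := by
  unfold Phi1 Phi2 Psi1; split_ifs <;> omega

lemma Psi_Phi2 {n j s : ℕ} (hj : j ≤ n+1) (hs : s ≤ n) :
    Psi2 n (Phi1 j s) (Phi2 n j s) = s := by
  unfold Phi1 Phi2 Psi2; split_ifs <;> omega

lemma Phi_Psi1 {n t i : ℕ} (ht : t ≤ n) (hi : i ≤ n+1) :
    Phi1 (Psi1 n t i) (Psi2 n t i) = t := by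
  unfold Psi1 Psi2 Phi1; split_ifs <;> omega

lemma Phi_Psi2 {n t i : ℕ} (ht : t ≤ n) (hi : i ≤ n+1) :
    Phi2 n (Psi1 n t i) (Psi2 n t i) = i := by
  unfold Psi1 Psi2 Phi2; split_ifs <;> omega

/-- master rotation-merge exchange lemma at generator level. -/
lemma L8gen {n : ℕ} (j s : ℕ) (hj : j ≤ n+1) (hs : s ≤ n) (a : ℕ → A) (β : ℕ → ℕ → B) :
    gen k A B (n+1) (mergeA k A B ε s ((rotA A (n+1))^[j] a) ((rotB B (n+1))^[j] β))
        (mergeB B s ((rotB B (n+1))^[j] β))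
      = gen k A B (n+1)
          ((rotA A n)^[Phi1 j s] (faceA k A B ε (n+1) (Phi2 n j s) a β))
          ((rotB B n)^[Phi1 j s] (faceB B (n+1) (Phi2 n j s) β)) := by
  unfold Phi1 Phi2
  split_ifs with h1 h2
  · rw [faceA_lt k A B ε (show s - j < n+1 by omega), faceB_lt B (show s - j < n+1 by omega)]
    exact gen_congr k A B (fun r hr => L8aA k A B ε s hs j a β h1 r hr)
      (fun p q hpq hq => L8aB B s hs j β h1 p q hpq hq)
  · subst h2
    rw [faceA_ge k A B ε (show ¬ n+1 < n+1 by omega), faceB_ge B (show ¬ n+1 < n+1 by omega)]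
    exact gen_congr k A B (fun r hr => L8bA k A B ε s hs a β r hr)
      (fun p q hpq hq => L8bB B s hs β p q hpq hq)
  · rw [faceA_lt k A B ε (show n+2+s-j < n+1 by omega), faceB_lt B (show n+2+s-j < n+1 by omega)]
    exact gen_congr k A B
      (fun r hr => L8cA k A B ε s j hs (by omega) hj a β r hr)
      (fun p q hpq hq => L8cB B s j hs (by omega) hj β p q hpq hq)

/-- sign compatibility for `Phi`. -/
lemma Phi_sign {n j s : ℕ} (hj : j ≤ n+1) (hs : s ≤ n) :
    ((-1 : ℤ)) ^ ((n+1)*j + s) = (-1) ^ (n * Phi1 j s + Phi2 n j s) := by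
  unfold Phi1 Phi2
  split_ifs with h1 h2
  · refine m1pow_congr ?_
    have e : (n+1)*j = n*j + j := by ring
    rw [e]
    generalize n*j = m
    omega
  · subst h2
    refine m1pow_congr ?_
    have e : (n+1)*(s+1) = n*s + n + s + 1 := by ring
    rw [e]
    generalize n*s = m
    omega
  · obtain ⟨w, rfl⟩ : ∃ w, j = w + 1 := ⟨j - 1, by omega⟩
    refine m1pow_congr ?_
    have e : (n+1)*(w+1) = n*w + n + w + 1 := by ring
    have e2 : n * (w + 1 - 1) = n * w := by simp
    rw [e, e2]
    generalize n*w = m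
    omega

end GenLevel

section MainLemmas

variable (ε : B →ₐ[k] A)

lemma lam_order {n : ℕ} (lam : Module.End k (TS k A B (n+1)))
    (hlam : ∀ (a : ℕ → A) (β : ℕ → ℕ → B), lam (gen k A B (n + 1) a β) =
      (-1 : ℤ) ^ n • gen k A B (n + 1) (rotA A n a) (rotB B n β)) :
    lam ^ (n+1) = 1 := by
  refine TS_ext k A B (fun a β => ?_)
  rw [lam_pow k A B lam hlam (n+1) a β, gen_rot_order k A B a β, Module.End.one_apply,
    Even.neg_one_pow (Nat.even_mul_succ_self n), one_smul]

lemma bb_zero (hcent : ∀ (b : B) (a : A), ε b * a = a * ε b) {n : ℕ}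
    (b1 : TS k A B (n+3) →ₗ[k] TS k A B (n+2)) (b0 : TS k A B (n+2) →ₗ[k] TS k A B (n+1))
    (h1 : ∀ (a : ℕ → A) (β : ℕ → ℕ → B), b1 (gen k A B (n+3) a β) =
      (∑ i ∈ Finset.range (n + 2), (-1 : ℤ) ^ i •
          gen k A B (n+2) (mergeA k A B ε i a β) (mergeB B i β))
        + (-1 : ℤ) ^ (n + 2) •
          gen k A B (n+2) (cmergeA k A B ε (n + 2) a β) (cmergeB B (n + 2) β))
    (h0 : ∀ (a : ℕ → A) (β : ℕ → ℕ → B), b0 (gen k A B (n+2) a β) =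
      (∑ i ∈ Finset.range (n + 1), (-1 : ℤ) ^ i •
          gen k A B (n+1) (mergeA k A B ε i a β) (mergeB B i β))
        + (-1 : ℤ) ^ (n + 1) •
          gen k A B (n+1) (cmergeA k A B ε (n + 1) a β) (cmergeB B (n + 1) β)) :
    b0.comp b1 = 0 := by
  have h1f : ∀ (a : ℕ → A) (β : ℕ → ℕ → B), b1 (gen k A B (n+3) a β)
      = ∑ i ∈ Finset.range (n+3), (-1:ℤ)^i •
          gen k A B (n+2) (faceA k A B ε (n+2) i a β) (faceB B (n+2) i β) := by
    intro a β
    rw [h1 a β, Finset.sum_range_succ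
      (f := fun i => ((-1:ℤ))^i • gen k A B (n+2) (faceA k A B ε (n+2) i a β) (faceB B (n+2) i β))]
    congr 1
    · refine Finset.sum_congr rfl fun i hi => ?_
      rw [faceA_lt k A B ε (Finset.mem_range.1 hi), faceB_lt B (Finset.mem_range.1 hi)]
    · rw [faceA_ge k A B ε (lt_irrefl _), faceB_ge B (lt_irrefl _)]
  have h0f : ∀ (a : ℕ → A) (β : ℕ → ℕ → B), b0 (gen k A B (n+2) a β)
      = ∑ i ∈ Finset.range (n+2), (-1:ℤ)^i •
          gen k A B (n+1) (faceA k A B ε (n+1) i a β) (faceB B (n+1) i β) := by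
    intro a β
    rw [h0 a β, Finset.sum_range_succ
      (f := fun i => ((-1:ℤ))^i • gen k A B (n+1) (faceA k A B ε (n+1) i a β) (faceB B (n+1) i β))]
    congr 1
    · refine Finset.sum_congr rfl fun i hi => ?_
      rw [faceA_lt k A B ε (Finset.mem_range.1 hi), faceB_lt B (Finset.mem_range.1 hi)]
    · rw [faceA_ge k A B ε (lt_irrefl _), faceB_ge B (lt_irrefl _)]
  refine TS_ext k A B (fun a β => ?_)
  rw [LinearMap.comp_apply, LinearMap.zero_apply, h1f a β, map_sum]
  have step : ∀ i ∈ Finset.range (n+3),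
      b0 ((-1:ℤ)^i • gen k A B (n+2) (faceA k A B ε (n+2) i a β) (faceB B (n+2) i β))
        = ∑ j ∈ Finset.range (n+2), ((-1:ℤ)^(i+j)) •
            gen k A B (n+1)
              (faceA k A B ε (n+1) j (faceA k A B ε (n+2) i a β) (faceB B (n+2) i β))
              (faceB B (n+1) j (faceB B (n+2) i β)) := by
    intro i _
    rw [map_zsmul, h0f, Finset.smul_sum]
    exact Finset.sum_congr rfl fun j _ => by rw [smul_smul, ← pow_add]
  rw [Finset.sum_congr rfl step, ← Finset.sum_product']
  exact simplicial_cancel (n+1)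
    (fun i j => gen k A B (n+1)
      (faceA k A B ε (n+1) j (faceA k A B ε (n+2) i a β) (faceB B (n+2) i β))
      (faceB B (n+1) j (faceB B (n+2) i β)))
    (fun i j hji hi hj2 => keyface k A B ε hcent i j hji hi hj2 a β)

lemma btrbtr_zero (hcent : ∀ (b : B) (a : A), ε b * a = a * ε b) {n : ℕ}
    (b1 : TS k A B (n+3) →ₗ[k] TS k A B (n+2)) (b0 : TS k A B (n+2) →ₗ[k] TS k A B (n+1))
    (h1 : ∀ (a : ℕ → A) (β : ℕ → ℕ → B), b1 (gen k A B (n+3) a β) =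
      ∑ i ∈ Finset.range (n + 2), (-1 : ℤ) ^ i •
          gen k A B (n+2) (mergeA k A B ε i a β) (mergeB B i β))
    (h0 : ∀ (a : ℕ → A) (β : ℕ → ℕ → B), b0 (gen k A B (n+2) a β) =
      ∑ i ∈ Finset.range (n + 1), (-1 : ℤ) ^ i •
          gen k A B (n+1) (mergeA k A B ε i a β) (mergeB B i β)) :
    b0.comp b1 = 0 := by
  have h1f : ∀ (a : ℕ → A) (β : ℕ → ℕ → B), b1 (gen k A B (n+3) a β)
      = ∑ i ∈ Finset.range (n+2), (-1:ℤ)^i •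
          gen k A B (n+2) (faceA k A B ε (n+2) i a β) (faceB B (n+2) i β) := by
    intro a β
    rw [h1 a β]
    refine Finset.sum_congr rfl fun i hi => ?_
    rw [faceA_lt k A B ε (Finset.mem_range.1 hi), faceB_lt B (Finset.mem_range.1 hi)]
  have h0f : ∀ (a : ℕ → A) (β : ℕ → ℕ → B), b0 (gen k A B (n+2) a β)
      = ∑ i ∈ Finset.range (n+1), (-1:ℤ)^i •
          gen k A B (n+1) (faceA k A B ε (n+1) i a β) (faceB B (n+1) i β) := by
    intro a β
    rw [h0 a β]
    refine Finset.sum_congr rfl fun i hi => ?_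
    rw [faceA_lt k A B ε (Finset.mem_range.1 hi), faceB_lt B (Finset.mem_range.1 hi)]
  refine TS_ext k A B (fun a β => ?_)
  rw [LinearMap.comp_apply, LinearMap.zero_apply, h1f a β, map_sum]
  have step : ∀ i ∈ Finset.range (n+2),
      b0 ((-1:ℤ)^i • gen k A B (n+2) (faceA k A B ε (n+2) i a β) (faceB B (n+2) i β))
        = ∑ j ∈ Finset.range (n+1), ((-1:ℤ)^(i+j)) •
            gen k A B (n+1)
              (faceA k A B ε (n+1) j (faceA k A B ε (n+2) i a β) (faceB B (n+2) i β))
              (faceB B (n+1) j (faceB B (n+2) i β)) := by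
    intro i _
    rw [map_zsmul, h0f, Finset.smul_sum]
    exact Finset.sum_congr rfl fun j _ => by rw [smul_smul, ← pow_add]
  rw [Finset.sum_congr rfl step, ← Finset.sum_product']
  exact simplicial_cancel n
    (fun i j => gen k A B (n+1)
      (faceA k A B ε (n+1) j (faceA k A B ε (n+2) i a β) (faceB B (n+2) i β))
      (faceB B (n+1) j (faceB B (n+2) i β)))
    (fun i j hji hi hj2 => keyface k A B ε hcent i j hji (by omega) (by omega) a β)

end MainLemmas

section MainLemmas2

variable (ε : B →ₐ[k] A)

lemma lam_btr_lemma {n : ℕ}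
    (lam0 : Module.End k (TS k A B (n+1))) (lam1 : Module.End k (TS k A B (n+2)))
    (b0 btr0 : TS k A B (n+2) →ₗ[k] TS k A B (n+1))
    (hlam0 : ∀ (a : ℕ → A) (β : ℕ → ℕ → B), lam0 (gen k A B (n + 1) a β) =
      (-1 : ℤ) ^ n • gen k A B (n + 1) (rotA A n a) (rotB B n β))
    (hlam1 : ∀ (a : ℕ → A) (β : ℕ → ℕ → B), lam1 (gen k A B (n + 2) a β) =
      (-1 : ℤ) ^ (n+1) • gen k A B (n + 2) (rotA A (n+1) a) (rotB B (n+1) β))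
    (hb0 : ∀ (a : ℕ → A) (β : ℕ → ℕ → B), b0 (gen k A B (n+2) a β) =
      (∑ i ∈ Finset.range (n + 1), (-1 : ℤ) ^ i •
          gen k A B (n+1) (mergeA k A B ε i a β) (mergeB B i β))
        + (-1 : ℤ) ^ (n + 1) •
          gen k A B (n+1) (cmergeA k A B ε (n + 1) a β) (cmergeB B (n + 1) β))
    (hbtr0 : ∀ (a : ℕ → A) (β : ℕ → ℕ → B), btr0 (gen k A B (n+2) a β) =
      ∑ i ∈ Finset.range (n + 1), (-1 : ℤ) ^ i •
          gen k A B (n+1) (mergeA k A B ε i a β) (mergeB B i β)) :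
    ((1 - lam0 : Module.End k (TS k A B (n+1))) :
        TS k A B (n+1) →ₗ[k] TS k A B (n+1)).comp btr0
      = b0.comp ((1 - lam1 : Module.End k (TS k A B (n+2))) :
        TS k A B (n+2) →ₗ[k] TS k A B (n+2)) := by
  refine TS_ext k A B (fun a β => ?_)
  rw [LinearMap.comp_apply, LinearMap.comp_apply, LinearMap.sub_apply, LinearMap.sub_apply,
    Module.End.one_apply, Module.End.one_apply, map_sub]
  have hA : lam0 (btr0 (gen k A B (n+2) a β))
      = (∑ i ∈ Finset.range n, ((-1:ℤ)^(i+n)) •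
          gen k A B (n+1) (rotA A n (mergeA k A B ε i a β)) (rotB B n (mergeB B i β)))
        + gen k A B (n+1) (rotA A n (mergeA k A B ε n a β)) (rotB B n (mergeB B n β)) := by
    rw [hbtr0 a β, map_sum]
    rw [Finset.sum_congr rfl (fun i (hi : i ∈ Finset.range (n+1)) => by
      rw [map_zsmul, hlam0, smul_smul, ← pow_add])]
    rw [Finset.sum_range_succ]
    congr 1
    rw [show ((-1:ℤ))^(n+n) = 1 from Even.neg_one_pow ⟨n, rfl⟩, one_smul]
  have hB : b0 (lam1 (gen k A B (n+2) a β))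
      = (∑ i ∈ Finset.range n, ((-1:ℤ)^(i+n)) •
          gen k A B (n+1) (rotA A n (mergeA k A B ε i a β)) (rotB B n (mergeB B i β)))
        + ((-1:ℤ)^(n+1) •
            gen k A B (n+1) (cmergeA k A B ε (n + 1) a β) (cmergeB B (n + 1) β)
          + gen k A B (n+1) (rotA A n (mergeA k A B ε n a β)) (rotB B n (mergeB B n β))) := by
    rw [hlam1 a β, map_zsmul, hb0 (rotA A (n+1) a) (rotB B (n+1) β)]
    rw [Finset.sum_range_succ']
    have e1 : (∑ i ∈ Finset.range n, ((-1:ℤ)^(i+1)) •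
          gen k A B (n+1)
            (mergeA k A B ε (i+1) (rotA A (n+1) a) (rotB B (n+1) β))
            (mergeB B (i+1) (rotB B (n+1) β)))
        = ∑ i ∈ Finset.range n, ((-1:ℤ)^(i+1)) •
            gen k A B (n+1) (rotA A n (mergeA k A B ε i a β)) (rotB B n (mergeB B i β)) :=
      Finset.sum_congr rfl (fun i hi => by
        rw [genL5 k A B ε (show i + 1 ≤ n from Finset.mem_range.1 hi) a β])
    rw [e1]
    rw [pow_zero, one_smul, genL6 k A B ε a β, genL7 k A B ε a β]
    rw [smul_add, smul_add, Finset.smul_sum]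
    have e2 : (∑ i ∈ Finset.range n, ((-1:ℤ)^(n+1)) • (((-1:ℤ)^(i+1)) •
          gen k A B (n+1) (rotA A n (mergeA k A B ε i a β)) (rotB B n (mergeB B i β))))
        = ∑ i ∈ Finset.range n, ((-1:ℤ)^(i+n)) •
            gen k A B (n+1) (rotA A n (mergeA k A B ε i a β)) (rotB B n (mergeB B i β)) :=
      Finset.sum_congr rfl (fun i hi => by
        rw [smul_smul, ← pow_add,
          m1pow_congr (show ((n+1)+(i+1)) % 2 = (i+n) % 2 by omega)])
    rw [e2]
    rw [smul_smul, ← pow_add,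
      show ((-1:ℤ))^((n+1)+(n+1)) = 1 from Even.neg_one_pow ⟨n+1, by ring⟩, one_smul]
    abel
  rw [hA, hB, hbtr0 a β, hb0 a β]
  abel

end MainLemmas2

section MainLemmas3

variable (ε : B →ₐ[k] A)

lemma N_b_lemma {n : ℕ}
    (lam0 : Module.End k (TS k A B (n+1))) (lam1 : Module.End k (TS k A B (n+2)))
    (b0 btr0 : TS k A B (n+2) →ₗ[k] TS k A B (n+1))
    (hlam0 : ∀ (a : ℕ → A) (β : ℕ → ℕ → B), lam0 (gen k A B (n + 1) a β) =
      (-1 : ℤ) ^ n • gen k A B (n + 1) (rotA A n a) (rotB B n β))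
    (hlam1 : ∀ (a : ℕ → A) (β : ℕ → ℕ → B), lam1 (gen k A B (n + 2) a β) =
      (-1 : ℤ) ^ (n+1) • gen k A B (n + 2) (rotA A (n+1) a) (rotB B (n+1) β))
    (hb0 : ∀ (a : ℕ → A) (β : ℕ → ℕ → B), b0 (gen k A B (n+2) a β) =
      (∑ i ∈ Finset.range (n + 1), (-1 : ℤ) ^ i •
          gen k A B (n+1) (mergeA k A B ε i a β) (mergeB B i β))
        + (-1 : ℤ) ^ (n + 1) •
          gen k A B (n+1) (cmergeA k A B ε (n + 1) a β) (cmergeB B (n + 1) β))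
    (hbtr0 : ∀ (a : ℕ → A) (β : ℕ → ℕ → B), btr0 (gen k A B (n+2) a β) =
      ∑ i ∈ Finset.range (n + 1), (-1 : ℤ) ^ i •
          gen k A B (n+1) (mergeA k A B ε i a β) (mergeB B i β)) :
    ((∑ t ∈ Finset.range (n+1), lam0 ^ t : Module.End k (TS k A B (n+1))) :
        TS k A B (n+1) →ₗ[k] TS k A B (n+1)).comp b0
      = btr0.comp ((∑ j ∈ Finset.range (n+2), lam1 ^ j : Module.End k (TS k A B (n+2))) :
        TS k A B (n+2) →ₗ[k] TS k A B (n+2)) := by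
  have h0f : ∀ (a : ℕ → A) (β : ℕ → ℕ → B), b0 (gen k A B (n+2) a β)
      = ∑ i ∈ Finset.range (n+2), (-1:ℤ)^i •
          gen k A B (n+1) (faceA k A B ε (n+1) i a β) (faceB B (n+1) i β) := by
    intro a β
    rw [hb0 a β, Finset.sum_range_succ
      (f := fun i => ((-1:ℤ))^i • gen k A B (n+1) (faceA k A B ε (n+1) i a β) (faceB B (n+1) i β))]
    congr 1
    · refine Finset.sum_congr rfl fun i hi => ?_
      rw [faceA_lt k A B ε (Finset.mem_range.1 hi), faceB_lt B (Finset.mem_range.1 hi)]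
    · rw [faceA_ge k A B ε (lt_irrefl _), faceB_ge B (lt_irrefl _)]
  refine TS_ext k A B (fun a β => ?_)
  rw [LinearMap.comp_apply, LinearMap.comp_apply]
  have lhs_eq : (∑ t ∈ Finset.range (n+1), lam0 ^ t) (b0 (gen k A B (n+2) a β))
      = ∑ p ∈ Finset.range (n+1) ×ˢ Finset.range (n+2), ((-1:ℤ)^(n*p.1+p.2)) •
          gen k A B (n+1) ((rotA A n)^[p.1] (faceA k A B ε (n+1) p.2 a β))
            ((rotB B n)^[p.1] (faceB B (n+1) p.2 β)) := by
    rw [LinearMap.sum_apply, h0f a β, Finset.sum_product]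
    refine Finset.sum_congr rfl fun t _ => ?_
    rw [map_sum]
    refine Finset.sum_congr rfl fun i _ => ?_
    rw [map_zsmul, lam_pow k A B lam0 hlam0 t, smul_smul, ← pow_add, Nat.add_comm i (n*t)]
  have rhs_eq : btr0 ((∑ j ∈ Finset.range (n+2), lam1 ^ j) (gen k A B (n+2) a β))
      = ∑ p ∈ Finset.range (n+2) ×ˢ Finset.range (n+1), ((-1:ℤ)^((n+1)*p.1+p.2)) •
          gen k A B (n+1)
            (mergeA k A B ε p.2 ((rotA A (n+1))^[p.1] a) ((rotB B (n+1))^[p.1] β))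
            (mergeB B p.2 ((rotB B (n+1))^[p.1] β)) := by
    rw [LinearMap.sum_apply, map_sum, Finset.sum_product]
    refine Finset.sum_congr rfl fun j _ => ?_
    rw [lam_pow k A B lam1 hlam1 j a β, map_zsmul, hbtr0, Finset.smul_sum]
    refine Finset.sum_congr rfl fun s2 _ => ?_
    rw [smul_smul, ← pow_add]
  rw [lhs_eq, rhs_eq]
  symm
  refine Finset.sum_nbij' (fun p => (Phi1 p.1 p.2, Phi2 n p.1 p.2))
    (fun p => (Psi1 n p.1 p.2, Psi2 n p.1 p.2)) ?_ ?_ ?_ ?_ ?_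
  · intro p hp
    simp only [Finset.mem_product, Finset.mem_range] at hp ⊢
    exact Phi_mem (by omega) (by omega)
  · intro p hp
    simp only [Finset.mem_product, Finset.mem_range] at hp ⊢
    exact Psi_mem (by omega) (by omega)
  · intro p hp
    simp only [Finset.mem_product, Finset.mem_range] at hp
    simp only [Prod.ext_iff]
    exact ⟨Psi_Phi1 (by omega) (by omega), Psi_Phi2 (by omega) (by omega)⟩
  · intro p hp
    simp only [Finset.mem_product, Finset.mem_range] at hp
    simp only [Prod.ext_iff]
    exact ⟨Phi_Psi1 (by omega) (by omega), Phi_Psi2 (by omega) (by omega)⟩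
  · intro p hp
    simp only [Finset.mem_product, Finset.mem_range] at hp
    rw [L8gen k A B ε p.1 p.2 (by omega) (by omega) a β, Phi_sign (by omega) (by omega)]

end MainLemmas3
/-!
STATEMENT 18: the cyclic bicomplex identities on secondary Hochschild chains:
`N(1 − λ) = (1 − λ)N = 0`, `N b = b' N`, `(1 − λ) b' = b (1 − λ)` and `b² = (b')² = 0`,
so the columns alternating between `b` and `−b'`, connected by `1 − λ` and `N`, form
a double complex `C(A,B,ε)`.
-/

theorem secondary_cyclic_bicomplex_identities
    (ε : B →ₐ[k] A) (hcent : ∀ (b : B) (a : A), ε b * a = a * ε b)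
    (lamC : ∀ n : ℕ, Module.End k (TS k A B (n + 1)))
    (hlam : ∀ (n : ℕ) (a : ℕ → A) (β : ℕ → ℕ → B),
      lamC n (gen k A B (n + 1) a β) =
        (-1 : ℤ) ^ n • gen k A B (n + 1) (rotA A n a) (rotB B n β))
    (bC : ∀ n : ℕ, TS k A B (n + 2) →ₗ[k] TS k A B (n + 1))
    (hb : ∀ (n : ℕ) (a : ℕ → A) (β : ℕ → ℕ → B),
      bC n (gen k A B (n + 2) a β) =
        (∑ i ∈ Finset.range (n + 1), (-1 : ℤ) ^ i •
            gen k A B (n + 1) (mergeA k A B ε i a β) (mergeB B i β))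
        + (-1 : ℤ) ^ (n + 1) •
            gen k A B (n + 1) (cmergeA k A B ε (n + 1) a β) (cmergeB B (n + 1) β))
    (btrC : ∀ n : ℕ, TS k A B (n + 2) →ₗ[k] TS k A B (n + 1))
    (hbtr : ∀ (n : ℕ) (a : ℕ → A) (β : ℕ → ℕ → B),
      btrC n (gen k A B (n + 2) a β) =
        ∑ i ∈ Finset.range (n + 1), (-1 : ℤ) ^ i •
            gen k A B (n + 1) (mergeA k A B ε i a β) (mergeB B i β))
    (N : ∀ n : ℕ, Module.End k (TS k A B (n + 1)))
    (hN : ∀ n, N n = ∑ j ∈ Finset.range (n + 1), lamC n ^ j) :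
    (∀ n, N n * (1 - lamC n) = 0) ∧
    (∀ n, (1 - lamC n) * N n = 0) ∧
    (∀ n, (N n : TS k A B (n + 1) →ₗ[k] TS k A B (n + 1)).comp (bC n) =
      (btrC n).comp (N (n + 1) : TS k A B (n + 2) →ₗ[k] TS k A B (n + 2))) ∧
    (∀ n, ((1 - lamC n : Module.End k (TS k A B (n + 1))) :
        TS k A B (n + 1) →ₗ[k] TS k A B (n + 1)).comp (btrC n) =
      (bC n).comp ((1 - lamC (n + 1) : Module.End k (TS k A B (n + 2))) :
        TS k A B (n + 2) →ₗ[k] TS k A B (n + 2))) ∧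
    (∀ n, (bC n).comp (bC (n + 1)) = 0) ∧
    (∀ n, (btrC n).comp (btrC (n + 1)) = 0) := by
  refine ⟨?_, ?_, ?_, ?_, ?_, ?_⟩
  · intro n
    rw [hN n, show (1 : Module.End k (TS k A B (n+1))) - lamC n = -(lamC n - 1) from (neg_sub (lamC n) 1).symm,
      mul_neg, geom_sum_mul, lam_order k A B (lamC n) (hlam n), sub_self, neg_zero]
  · intro n
    rw [hN n, show (1 : Module.End k (TS k A B (n+1))) - lamC n = -(lamC n - 1) from (neg_sub (lamC n) 1).symm,
      neg_mul, mul_geom_sum, lam_order k A B (lamC n) (hlam n), sub_self, neg_zero]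
  · intro n
    rw [hN n, hN (n+1)]
    exact N_b_lemma k A B ε (lamC n) (lamC (n+1)) (bC n) (btrC n) (hlam n) (hlam (n+1))
      (hb n) (hbtr n)
  · intro n
    exact lam_btr_lemma k A B ε (lamC n) (lamC (n+1)) (bC n) (btrC n) (hlam n) (hlam (n+1))
      (hb n) (hbtr n)
  · intro n
    exact bb_zero k A B ε hcent (bC (n+1)) (bC n) (hb (n+1)) (hb n)
  · intro n
    exact btrbtr_zero k A B ε hcent (btrC (n+1)) (btrC n) (hbtr (n+1)) (hbtr n)

end
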